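/- Fix ε with 0 < ε < 1 and an integer δ ≥ 1, and assume the following uniform abc conjecture (Masser's form): there exists a real number κ (depending only on ε and δ) such that for every number field L with [L:ℚ] ≤ δ and all a, b, c ∈ L ∖ {0} with a + b = c, one has h_L(a:b:c) ≤ (1+ε)·rad_L(a:b:c) + 2·log d_L + κ. Then for every number field L with [L:ℚ] ≤ δ, every finite set S of nonzero prime ideals of O_L, and every u ∈ L ∖ {0,1} such that both u and 1 − u are S-units, one has h_L(u:1) ≤ (1/(1−ε))·∑_{𝔮 ∈ S} log N(𝔮) + (2/(1−ε))·log d_L + κ. (This is the instance, for U = ℙ¹ ∖ {0,1,∞} with χ(U) = −1, of the paper's remark that a discriminant-explicit abc conjecture yields the bound with γ = −(2/(ε+χ(U)))·log d_L + κ.) -/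

import Mathlib

open NumberField IsDedekindDomain

/-- The additive `𝔭`-adic valuation `v_𝔭(x)` of `x ∈ K^×`, extended by `0` at `x = 0`. -/
noncomputable def vIntK (K : Type) [Field K] [NumberField K]
    (v : HeightOneSpectrum (𝓞 K)) (x : K) : ℤ :=
  if h : v.valuation K x = 0 then 0 else -Multiplicative.toAdd (WithZero.unzero h)

/-- `log N(𝔭)`, the logarithm of the absolute norm of the prime ideal `𝔭`. -/
noncomputable def logNormK (K : Type) [Field K] [NumberField K]
    (v : HeightOneSpectrum (𝓞 K)) : ℝ :=
  Real.log (Ideal.absNorm v.asIdeal)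

/-- The relative height `h_K(x₀:x₁:x₂) = ∑_v d_v log max_i |x_i|_v`: the archimedean part is a
sum over the infinite places weighted by the local degrees `mult w`, and at a finite place `𝔭`
one has `d_𝔭 · log max_i |x_i|_𝔭 = (max_i (-v_𝔭(x_i))) · log N(𝔭)`. -/
noncomputable def heightProjK (K : Type) [Field K] [NumberField K] (x₀ x₁ x₂ : K) : ℝ :=
  (∑ w : InfinitePlace K, (w.mult : ℝ) * Real.log (max (w x₀) (max (w x₁) (w x₂))))
    + ∑ᶠ v : HeightOneSpectrum (𝓞 K),
        ((max (-(vIntK K v x₀)) (max (-(vIntK K v x₁)) (-(vIntK K v x₂))) : ℤ) : ℝ)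
          * logNormK K v

/-- The relative height `h_K(u:1) = ∑_v d_v log max (|u|_v, 1)`. -/
noncomputable def height1K (K : Type) [Field K] [NumberField K] (u : K) : ℝ :=
  (∑ w : InfinitePlace K, (w.mult : ℝ) * Real.log (max (w u) 1))
    + ∑ᶠ v : HeightOneSpectrum (𝓞 K), ((max (-(vIntK K v u)) 0 : ℤ) : ℝ) * logNormK K v

/-- The radical `rad(x₀:x₁:x₂) = ∑ log N(𝔭)`, summed over the nonzero prime ideals `𝔭` for
which the set `{v_𝔭(x₀), v_𝔭(x₁), v_𝔭(x₂)}` has at least two elements. -/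
noncomputable def radK (K : Type) [Field K] [NumberField K] (x₀ x₁ x₂ : K) : ℝ :=
  ∑ᶠ v : HeightOneSpectrum (𝓞 K),
    if 2 ≤ ({vIntK K v x₀, vIntK K v x₁, vIntK K v x₂} : Finset ℤ).card
    then logNormK K v else 0

/-- `log d_K`, the logarithm of the absolute value of the discriminant of `K`. -/
noncomputable def logDiscK (K : Type) [Field K] [NumberField K] : ℝ :=
  Real.log |(NumberField.discr K : ℝ)|

section Aux

variable (K : Type) [Field K] [NumberField K]

lemma vIntK_one (v : HeightOneSpectrum (𝓞 K)) : vIntK K v 1 = 0 := by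
  unfold vIntK
  have h1 : v.valuation K (1 : K) = 1 := map_one _
  rw [dif_neg (by rw [h1]; exact one_ne_zero)]
  have : WithZero.unzero (show v.valuation K (1 : K) ≠ 0 by
      rw [h1]; exact one_ne_zero) = 1 :=
    WithZero.coe_inj.mp (by rw [WithZero.coe_unzero, h1, WithZero.coe_one])
  rw [this]
  simp

lemma logNormK_nonneg (v : HeightOneSpectrum (𝓞 K)) : 0 ≤ logNormK K v := by
  unfold logNormK
  apply Real.log_nonneg
  have h0 : Ideal.absNorm v.asIdeal ≠ 0 := by
    rw [ne_eq, Ideal.absNorm_eq_zero_iff]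
    exact v.ne_bot
  exact_mod_cast Nat.one_le_iff_ne_zero.mpr h0

lemma logDiscK_nonneg : 0 ≤ logDiscK K := by
  unfold logDiscK
  apply Real.log_nonneg
  rw [← Int.cast_abs]
  exact_mod_cast Int.one_le_abs (by exact_mod_cast NumberField.discr_ne_zero K)

end Aux

/-- **Uniform (Masser-type) abc implies the discriminant-explicit effective Siegel bound for
`ℙ¹ ∖ {0,1,∞}`.** Fix `0 < ε < 1` and `δ ≥ 1`, and assume there is `κ` such that for every
number field `L` of degree `≤ δ` and all nonzero `a, b, c ∈ L` with `a + b = c`,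
`h_L(a:b:c) ≤ (1+ε)·rad_L(a:b:c) + 2·log d_L + κ`. Then for every such `L`, every finite set
`S` of nonzero prime ideals of `O_L` and every `u ∈ L ∖ {0,1}` with `u` and `1 - u`
`S`-units, `h_L(u:1) ≤ (1/(1-ε))·∑_{𝔮 ∈ S} log N(𝔮) + (2/(1-ε))·log d_L + κ`. -/
theorem uniform_abc_implies_effective_siegel
    (ε : ℝ) (hε0 : 0 < ε) (hε1 : ε < 1) (δ : ℕ) (hδ : 1 ≤ δ) (κ : ℝ)
    (habc : ∀ (L : Type) [Field L] [NumberField L], Module.finrank ℚ L ≤ δ →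
      ∀ a b c : L, a ≠ 0 → b ≠ 0 → c ≠ 0 → a + b = c →
        heightProjK L a b c ≤ (1 + ε) * radK L a b c + 2 * logDiscK L + κ) :
    ∀ (L : Type) [Field L] [NumberField L], Module.finrank ℚ L ≤ δ →
      ∀ S : Finset (HeightOneSpectrum (𝓞 L)), ∀ u : L, u ≠ 0 → u ≠ 1 →
        (∀ v : HeightOneSpectrum (𝓞 L), v ∉ S → vIntK L v u = 0) →
        (∀ v : HeightOneSpectrum (𝓞 L), v ∉ S → vIntK L v (1 - u) = 0) →
        height1K L u ≤ (1 / (1 - ε)) * (∑ v ∈ S, logNormK L v)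
          + (2 / (1 - ε)) * logDiscK L + κ := by
  intro L _ _ hdeg S u hu0 hu1 hSu hS1u
  have h1u : (1 : L) - u ≠ 0 := sub_ne_zero.mpr (Ne.symm hu1)
  have key := habc L hdeg u (1 - u) 1 hu0 h1u one_ne_zero (by ring)
  have hlogD := logDiscK_nonneg L
  have hlogN := logNormK_nonneg L
  have hH1 : height1K L u = (∑ w : InfinitePlace L, (w.mult : ℝ) * Real.log (max (w u) 1))
      + ∑ v ∈ S, ((max (-(vIntK L v u)) 0 : ℤ) : ℝ) * logNormK L v := by
    unfold height1K
    congr 1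
    apply finsum_eq_sum_of_support_subset
    intro v hv
    by_contra hvs
    exact hv (by simp [hSu v hvs])
  have hHP : heightProjK L u (1 - u) 1
      = (∑ w : InfinitePlace L,
          (w.mult : ℝ) * Real.log (max (w u) (max (w (1 - u)) (w 1))))
      + ∑ v ∈ S, ((max (-(vIntK L v u)) (max (-(vIntK L v (1 - u))) (-(vIntK L v 1))) :
          ℤ) : ℝ) * logNormK L v := by
    unfold heightProjK
    congr 1
    apply finsum_eq_sum_of_support_subset
    intro v hv
    by_contra hvs
    exact hv (by simp [hSu v hvs, hS1u v hvs, vIntK_one])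
  have hrad : radK L u (1 - u) 1 = ∑ v ∈ S,
      (if 2 ≤ ({vIntK L v u, vIntK L v (1 - u), vIntK L v 1} : Finset ℤ).card
        then logNormK L v else 0) := by
    unfold radK
    apply finsum_eq_sum_of_support_subset
    intro v hv
    by_contra hvs
    exact hv (by simp [hSu v hvs, hS1u v hvs, vIntK_one])
  have hrad_le : radK L u (1 - u) 1 ≤ ∑ v ∈ S, logNormK L v := by
    rw [hrad]
    refine Finset.sum_le_sum fun v _ => ?_
    split
    · exact le_rfl
    · exact hlogN v
  have hS_nonneg : 0 ≤ ∑ v ∈ S, logNormK L v := Finset.sum_nonneg fun v _ => hlogN v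
  have hmono : height1K L u ≤ heightProjK L u (1 - u) 1 := by
    rw [hH1, hHP]
    apply add_le_add
    · refine Finset.sum_le_sum fun w _ => ?_
      refine mul_le_mul_of_nonneg_left ?_ (by positivity)
      refine Real.log_le_log (lt_of_lt_of_le one_pos (le_max_right _ _)) ?_
      refine max_le_max le_rfl ?_
      rw [map_one]
      exact le_max_right _ _
    · refine Finset.sum_le_sum fun v _ => ?_
      refine mul_le_mul_of_nonneg_right ?_ (hlogN v)
      rw [vIntK_one, neg_zero]
      exact_mod_cast max_le_max le_rfl (le_max_right (-(vIntK L v (1 - u))) 0)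
  have h1ε : (0 : ℝ) < 1 - ε := by linarith
  have hc1 : (1 + ε) ≤ 1 / (1 - ε) := by rw [le_div_iff₀ h1ε]; nlinarith
  have hc2 : (2 : ℝ) ≤ 2 / (1 - ε) := by rw [le_div_iff₀ h1ε]; nlinarith
  calc height1K L u ≤ heightProjK L u (1 - u) 1 := hmono
    _ ≤ (1 + ε) * radK L u (1 - u) 1 + 2 * logDiscK L + κ := key
    _ ≤ (1 / (1 - ε)) * (∑ v ∈ S, logNormK L v) + (2 / (1 - ε)) * logDiscK L + κ := by
        have h1 : (1 + ε) * radK L u (1 - u) 1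
            ≤ (1 / (1 - ε)) * (∑ v ∈ S, logNormK L v) :=
          le_trans (mul_le_mul_of_nonneg_left hrad_le (by linarith))
            (mul_le_mul_of_nonneg_right hc1 hS_nonneg)
        have h2 : 2 * logDiscK L ≤ (2 / (1 - ε)) * logDiscK L :=
          mul_le_mul_of_nonneg_right hc2 hlogD
        linarith
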